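/- For every m ∈ ℝ there exists a constant C(m) > 0, depending only on m (and which may be chosen to depend continuously on m), such that: for every μ ∈ ℝ and every 2π-periodic, twice continuously differentiable function u : ℝ → ℝ satisfying u'' + u − u³ = μ on ℝ and (1/2π)∫₀^{2π} u(x) dx = m, one has ∫₀^{2π} ( (u'(x))² + (u(x) − m)⁴ ) dx ≤ C(m). -/

import Mathlib

private lemma equilibria_pt_bound (m v : ℝ) :
    (1-3*m^2)*v^2 - 3*m*v^3 ≤ (1/2)*v^4 + ((1+3*m^2)^2 + 2187*m^4) := by
  nlinarith [sq_nonneg (v^2 - 2*(1+3*m^2)), sq_nonneg ((v+9*m)*(v-3*m)),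
    sq_nonneg ((v+9*m)*m), sq_nonneg v, sq_nonneg m, sq_nonneg (v*m)]

/-- Uniform a priori bound, continuous in the mass m, on 2π-periodic
equilibria u'' + u − u³ = μ of mass m: ∫₀^{2π} ((u')² + (u − m)⁴) ≤ C(m). -/
theorem equilibria_apriori_bound :
    ∃ C : ℝ → ℝ, Continuous C ∧ ∀ m : ℝ, 0 < C m ∧
      ∀ (μ : ℝ) (u : ℝ → ℝ), ContDiff ℝ 2 u →
        Function.Periodic u (2 * Real.pi) →
        (∀ x : ℝ, deriv (deriv u) x + u x - (u x) ^ 3 = μ) →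
        (1 / (2 * Real.pi)) * (∫ x in (0:ℝ)..(2 * Real.pi), u x) = m →
        (∫ x in (0:ℝ)..(2 * Real.pi), ((deriv u x) ^ 2 + (u x - m) ^ 4)) ≤ C m := by
  have hπ : (0:ℝ) < Real.pi := Real.pi_pos
  refine ⟨fun m => 4 * Real.pi * ((1 + 3*m^2)^2 + 2187*m^4) + 1, by continuity, ?_⟩
  intro m
  constructor
  · positivity
  intro μ u hu hper hode hmass
  set T : ℝ := 2 * Real.pi with hT
  have hT0 : (0:ℝ) ≤ T := by positivity
  -- regularity facts
  have hdiff : Differentiable ℝ u := hu.differentiable (by norm_num)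
  have hcu : Continuous u := hdiff.continuous
  have hu1 : ContDiff ℝ 1 (deriv u) := ((contDiff_succ_iff_deriv (n:=1)).mp hu).2.2
  have hdiff' : Differentiable ℝ (deriv u) := hu1.differentiable (by norm_num)
  have hcu' : Continuous (deriv u) := hdiff'.continuous
  have hcu'' : Continuous (deriv (deriv u)) := hu1.continuous_deriv le_rfl
  -- periodicity at the endpoints
  have huT : u T = u 0 := by
    have := hper 0
    simpa using this
  have hu'T : deriv u T = deriv u 0 := by
    have hfe : (fun y => u (y + T)) = u := funext fun y => hper y
    calc deriv u T = deriv u (0 + T) := by rw [zero_add]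
      _ = deriv (fun y => u (y + T)) 0 := (deriv_comp_add_const u T 0).symm
      _ = deriv u 0 := by rw [hfe]
  -- mass
  have hIu : ∫ x in (0:ℝ)..T, u x = T * m := by
    have hne : T ≠ 0 := by positivity
    field_simp at hmass
    linarith
  have hv0 : ∫ x in (0:ℝ)..T, (u x - m) = 0 := by
    rw [intervalIntegral.integral_sub (hcu.intervalIntegrable _ _)
      (intervalIntegrable_const)]
    rw [hIu, intervalIntegral.integral_const, sub_zero, smul_eq_mul]
    ring
  -- integration by parts
  have hibp : ∫ x in (0:ℝ)..T,
      (deriv (deriv u) x * (u x - m) + deriv u x * deriv u x) = 0 := by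
    have h := intervalIntegral.integral_deriv_mul_eq_sub
      (a := 0) (b := T) (u := deriv u) (v := fun x => u x - m)
      (u' := deriv (deriv u)) (v' := deriv u)
      (fun x _ => (hdiff' x).hasDerivAt)
      (fun x _ => ((hdiff x).hasDerivAt).sub_const m)
      (hcu''.intervalIntegrable _ _) (hcu'.intervalIntegrable _ _)
    rw [h]
    try simp only []
    rw [huT, hu'T]
    ring
  -- pointwise algebraic identity using the ODE
  have hfun : ∀ x, deriv u x ^ 2 + (u x - m) ^ 4
      = (deriv (deriv u) x * (u x - m) + deriv u x * deriv u x)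
        + ((1 - 3*m^2)*(u x - m)^2 - 3*m*(u x - m)^3)
        - (μ - m + m^3) * (u x - m) := by
    intro x
    have h := hode x
    have h2 : deriv (deriv u) x = μ - u x + (u x)^3 := by linarith
    rw [h2]; ring
  -- continuity of the pieces
  have hcv : Continuous (fun x => u x - m) := hcu.sub continuous_const
  have hcB : Continuous (fun x => (1 - 3*m^2)*(u x - m)^2 - 3*m*(u x - m)^3) :=
    (continuous_const.mul (hcv.pow 2)).sub (continuous_const.mul (hcv.pow 3))
  have hcA : Continuous (fun x =>
      deriv (deriv u) x * (u x - m) + deriv u x * deriv u x) :=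
    (hcu''.mul hcv).add (hcu'.mul hcu')
  -- the key integral identity
  have hkey : (∫ x in (0:ℝ)..T, (deriv u x ^ 2 + (u x - m) ^ 4))
      = ∫ x in (0:ℝ)..T, ((1 - 3*m^2)*(u x - m)^2 - 3*m*(u x - m)^3) := by
    have h1 : (∫ x in (0:ℝ)..T, (deriv u x ^ 2 + (u x - m) ^ 4))
        = ∫ x in (0:ℝ)..T,
          ((deriv (deriv u) x * (u x - m) + deriv u x * deriv u x)
            + ((1 - 3*m^2)*(u x - m)^2 - 3*m*(u x - m)^3)
            - (μ - m + m^3) * (u x - m)) := by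
      apply intervalIntegral.integral_congr
      intro x _
      exact hfun x
    rw [h1]
    rw [intervalIntegral.integral_sub (by
        exact (hcA.add hcB).intervalIntegrable _ _)
      (by exact ((continuous_const.mul hcv)).intervalIntegrable _ _)]
    rw [intervalIntegral.integral_add (hcA.intervalIntegrable _ _)
      (hcB.intervalIntegrable _ _)]
    rw [intervalIntegral.integral_const_mul, hv0, hibp]
    ring
  -- pointwise bound
  set K : ℝ := (1 + 3*m^2)^2 + 2187*m^4 with hKdef
  have hbound : ∀ x, (1 - 3*m^2)*(u x - m)^2 - 3*m*(u x - m)^3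
      ≤ (1/2)*(u x - m)^4 + K := by
    intro x
    rw [hKdef]
    exact equilibria_pt_bound m (u x - m)
  -- integrate the bound
  have hmono : (∫ x in (0:ℝ)..T, ((1 - 3*m^2)*(u x - m)^2 - 3*m*(u x - m)^3))
      ≤ ∫ x in (0:ℝ)..T, ((1/2)*(u x - m)^4 + K) := by
    apply intervalIntegral.integral_mono_on hT0
      (hcB.intervalIntegrable _ _)
      (by exact ((continuous_const.mul (hcv.pow 4)).add continuous_const).intervalIntegrable _ _)
    intro x _
    exact hbound x
  have hsplit : (∫ x in (0:ℝ)..T, ((1/2)*(u x - m)^4 + K))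
      = (1/2) * (∫ x in (0:ℝ)..T, (u x - m)^4) + T * K := by
    rw [intervalIntegral.integral_add
      (by exact (continuous_const.mul (hcv.pow 4)).intervalIntegrable _ _)
      (intervalIntegrable_const)]
    rw [intervalIntegral.integral_const_mul, intervalIntegral.integral_const,
      sub_zero, smul_eq_mul]
  -- the full integral dominates ∫ v⁴
  have hS : (∫ x in (0:ℝ)..T, (deriv u x ^ 2 + (u x - m) ^ 4))
      = (∫ x in (0:ℝ)..T, deriv u x ^ 2) + (∫ x in (0:ℝ)..T, (u x - m) ^ 4) := by
    rw [intervalIntegral.integral_add (f := fun x => deriv u x ^ 2) (g := fun x => (u x - m) ^ 4) ((hcu'.pow 2).intervalIntegrable _ _)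
      ((hcv.pow 4).intervalIntegrable _ _)]
  have hd2 : (0:ℝ) ≤ ∫ x in (0:ℝ)..T, deriv u x ^ 2 := by
    apply intervalIntegral.integral_nonneg hT0
    intro x _
    positivity
  have hKnn : (0:ℝ) ≤ K := by positivity
  -- conclude
  have hfinal : (∫ x in (0:ℝ)..T, (deriv u x ^ 2 + (u x - m) ^ 4)) ≤ 2 * T * K := by
    have h4 : (∫ x in (0:ℝ)..T, (u x - m) ^ 4)
        ≤ ∫ x in (0:ℝ)..T, (deriv u x ^ 2 + (u x - m) ^ 4) := by linarith
    have h5 := hkey.le.trans (hmono.trans hsplit.le)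
    nlinarith [h4, h5]
  calc (∫ x in (0:ℝ)..T, (deriv u x ^ 2 + (u x - m) ^ 4)) ≤ 2 * T * K := hfinal
    _ = 4 * Real.pi * K := by rw [hT]; ring
    _ ≤ 4 * Real.pi * ((1 + 3*m^2)^2 + 2187*m^4) + 1 := by
        rw [hKdef]; linarith
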